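/- Let L ≅ F/R where F is a free Lie ring and R an ideal. Then for any abelian Lie ring A, the transgression map Hom(R/[F,R], A) → H²(L,A) associated with the natural central extension 0 → R/[F,R] → F/[F,R] → L → 0 is surjective. -/

import Mathlib

/-- The five cocycle conditions of Horn–Zandi for a pair `(f, g)` of maps `L × L → A`,
where `L` is a Lie ring and `A` a trivial `L`-module (an abelian group). -/
def IsLieRingCocycle {L A : Type*} [LieRing L] [AddCommGroup A]
    (f g : L → L → A) : Prop :=
  (∀ x y z : L, f (x + y) z = f x z + f y z + g ⁅x, z⁆ ⁅y, z⁆) ∧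
  (∀ x y z : L, f x (y + z) = f x y + f x z + g ⁅x, y⁆ ⁅x, z⁆) ∧
  (∀ x : L, f x x = 0) ∧
  (∀ x y z : L, f x ⁅y, z⁆ + f z ⁅x, y⁆ + f y ⁅z, x⁆ =
    - g ⁅x, ⁅y, z⁆⁆ ⁅z, ⁅x, y⁆⁆ - g (-⁅y, ⁅z, x⁆⁆) ⁅y, ⁅z, x⁆⁆) ∧
  (∀ x y z : L, g (x + y) z + g x y = g x (y + z) + g y z) ∧
  (∀ x y : L, g x y = g y x)

/-- Coboundaries: pairs arising from a map `t : L → A` with `t 0 = 0` via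
`f (x, y) = -t ⁅x, y⁆` and `g (x, y) = t x + t y - t (x + y)`. -/
def IsLieRingCoboundary {L A : Type*} [LieRing L] [AddCommGroup A]
    (f g : L → L → A) : Prop :=
  ∃ t : L → A, t 0 = 0 ∧ (∀ x y : L, f x y = - t ⁅x, y⁆) ∧
    (∀ x y : L, g x y = t x + t y - t (x + y))

section Aux

@[ext] structure CExt (L A : Type*) where
  fst : L
  snd : A

namespace CocycleAux

variable {L A : Type*} [LieRing L] [AddCommGroup A] {f g : L → L → A}

section lemmas
variable (hfg : IsLieRingCocycle f g)
include hfg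

theorem g00 : g 0 0 = 0 := by
  have h1 := hfg.1 0 0 0
  have h3 := hfg.2.2.1 (0 : L)
  simp [h3] at h1
  exact h1.symm

theorem gx0 (x : L) : g x 0 = 0 := by
  have h5 := hfg.2.2.2.2.1 x 0 0
  simp [g00 hfg] at h5
  exact h5

theorem g0x (x : L) : g 0 x = 0 := by
  rw [hfg.2.2.2.2.2, gx0 hfg]

theorem fx0 (x : L) : f x 0 = 0 := by
  have h2 := hfg.2.1 x 0 0
  simp [g00 hfg] at h2
  exact h2

theorem f0x (x : L) : f 0 x = 0 := by
  have h1 := hfg.1 0 0 x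
  simp [g00 hfg] at h1
  exact h1

theorem antisym (x y : L) : f x y + f y x + g ⁅x, y⁆ ⁅y, x⁆ = 0 := by
  have e := hfg.2.2.1 (x + y)
  rw [hfg.1 x y (x + y), hfg.2.1 x x y, hfg.2.1 y x y] at e
  simp only [lie_self, lie_add, add_lie, zero_add, add_zero, hfg.2.2.1,
    g0x hfg, gx0 hfg] at e
  linear_combination (norm := abel) e

theorem fneg (x y : L) : f x (-y) = -f x y - g ⁅x, y⁆ ⁅y, x⁆ := by
  have h2 := hfg.2.1 x y (-y)
  simp [fx0 hfg] at h2
  linear_combination (norm := abel) -h2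

theorem gaux (q r : L) : g (r - q) q = g (-q) q - g r (-q) := by
  have h5 := hfg.2.2.2.2.1 r (-q) q
  simp [gx0 hfg, sub_eq_add_neg] at h5
  linear_combination (norm := abel) h5

theorem key (x y z : L) :
    f x ⁅y, z⁆ = f ⁅x, y⁆ z + f y ⁅x, z⁆ + g ⁅⁅x, y⁆, z⁆ ⁅y, ⁅x, z⁆⁆ := by
  have e := hfg.2.2.2.1 x y z
  have hzx : (⁅z, x⁆ : L) = -⁅x, z⁆ := by rw [← lie_skew]
  have hq : (⁅⁅x, y⁆, z⁆ : L) = -⁅z, ⁅x, y⁆⁆ := by rw [← lie_skew]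
  have hp : (⁅x, ⁅y, z⁆⁆ : L) = ⁅y, ⁅x, z⁆⁆ - ⁅z, ⁅x, y⁆⁆ := by
    rw [leibniz_lie x y z, hq]; abel
  rw [hzx, lie_neg, neg_neg, hp] at e
  have ha := antisym hfg z ⁅x, y⁆
  have hb := fneg hfg y ⁅x, z⁆
  have hc := gaux hfg ⁅z, ⁅x, y⁆⁆ ⁅y, ⁅x, z⁆⁆
  rw [hq]
  rw [hq] at ha
  have hd : (⁅⁅x, z⁆, y⁆ : L) = -⁅y, ⁅x, z⁆⁆ := by rw [← lie_skew]
  rw [hd] at hb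
  have h1 := hfg.2.2.2.2.2 ⁅z, ⁅x, y⁆⁆ (-⁅z, ⁅x, y⁆⁆)
  have h2 := hfg.2.2.2.2.2 ⁅y, ⁅x, z⁆⁆ (-⁅z, ⁅x, y⁆⁆)
  linear_combination (norm := abel) e - ha - hb - hc + h1 + h2

end lemmas

/-- The abelian group structure on `CExt L A` induced by the symmetric
2-cocycle `g`. -/
def cextAdd (g : L → L → A) (a b : CExt L A) : CExt L A :=
  ⟨a.fst + b.fst, a.snd + b.snd + g a.fst b.fst⟩

def cextNeg (g : L → L → A) (a : CExt L A) : CExt L A :=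
  ⟨-a.fst, -a.snd - g a.fst (-a.fst)⟩

/-- The abelian group structure on `CExt L A` induced by the symmetric
2-cocycle `g`. -/
def cextAddCommGroup (f g : L → L → A) (hfg : IsLieRingCocycle f g) :
    AddCommGroup (CExt L A) :=
  letI : Add (CExt L A) := ⟨cextAdd g⟩
  letI : Zero (CExt L A) := ⟨⟨0, 0⟩⟩
  letI : Neg (CExt L A) := ⟨cextNeg g⟩
  letI grp : AddGroup (CExt L A) := AddGroup.ofLeftAxioms
    (by
      intro a b c
      refine CExt.ext (add_assoc _ _ _) ?_
      show a.snd + b.snd + g a.fst b.fst + c.snd + g (a.fst + b.fst) c.fst =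
        a.snd + (b.snd + c.snd + g b.fst c.fst) + g a.fst (b.fst + c.fst)
      linear_combination (norm := abel) hfg.2.2.2.2.1 a.fst b.fst c.fst)
    (by
      intro a
      refine CExt.ext (zero_add _) ?_
      show 0 + a.snd + g 0 a.fst = a.snd
      rw [g0x hfg]; abel)
    (by
      intro a
      refine CExt.ext (neg_add_cancel _) ?_
      show -a.snd - g a.fst (-a.fst) + a.snd + g (-a.fst) a.fst = 0
      rw [hfg.2.2.2.2.2 (-a.fst) a.fst]; abel)
  { grp with
    add_comm := by
      intro a b
      refine CExt.ext (add_comm _ _) ?_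
      show a.snd + b.snd + g a.fst b.fst = b.snd + a.snd + g b.fst a.fst
      rw [hfg.2.2.2.2.2 a.fst b.fst]; abel }

/-- The Lie ring structure on `CExt L A` induced by the cocycle `(f, g)`. -/
def cextLieRing (f g : L → L → A) (hfg : IsLieRingCocycle f g) :
    LieRing (CExt L A) where
  toAddCommGroup := cextAddCommGroup f g hfg
  bracket a b := ⟨⁅a.fst, b.fst⁆, f a.fst b.fst⟩
  add_lie a b c := by
    refine CExt.ext ?_ ?_
    · show ⁅a.fst + b.fst, c.fst⁆ = ⁅a.fst, c.fst⁆ + ⁅b.fst, c.fst⁆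
      exact add_lie _ _ _
    · show f (a.fst + b.fst) c.fst
        = f a.fst c.fst + f b.fst c.fst + g ⁅a.fst, c.fst⁆ ⁅b.fst, c.fst⁆
      exact hfg.1 a.fst b.fst c.fst
  lie_add a b c := by
    refine CExt.ext ?_ ?_
    · show ⁅a.fst, b.fst + c.fst⁆ = ⁅a.fst, b.fst⁆ + ⁅a.fst, c.fst⁆
      exact lie_add _ _ _
    · show f a.fst (b.fst + c.fst)
        = f a.fst b.fst + f a.fst c.fst + g ⁅a.fst, b.fst⁆ ⁅a.fst, c.fst⁆
      exact hfg.2.1 a.fst b.fst c.fst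
  lie_self a := by
    refine CExt.ext ?_ ?_
    · show ⁅a.fst, a.fst⁆ = (0 : L)
      exact lie_self _
    · show f a.fst a.fst = (0 : A)
      exact hfg.2.2.1 a.fst
  leibniz_lie a b c := by
    refine CExt.ext ?_ ?_
    · show ⁅a.fst, ⁅b.fst, c.fst⁆⁆
        = ⁅⁅a.fst, b.fst⁆, c.fst⁆ + ⁅b.fst, ⁅a.fst, c.fst⁆⁆
      exact leibniz_lie _ _ _
    · show f a.fst ⁅b.fst, c.fst⁆
        = f ⁅a.fst, b.fst⁆ c.fst + f b.fst ⁅a.fst, c.fst⁆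
          + g ⁅⁅a.fst, b.fst⁆, c.fst⁆ ⁅b.fst, ⁅a.fst, c.fst⁆⁆
      exact key hfg a.fst b.fst c.fst

end CocycleAux
end Aux

/-- Let `L ≅ F/R` where `F` is a free Lie ring (the free Lie
algebra over `ℤ` on a set `X`) and `R` an ideal of `F`. Then for any abelian
Lie ring `A`, the transgression map `Hom(R/[F,R], A) → H²(L, A)` associated
with the natural central extension `0 → R/[F,R] → F/[F,R] → L → 0` is
surjective: every cohomology class, represented by a cocycle `(f, g)` of `L`
in `A`, is (up to a coboundary) the transgression `(χ ∘ FF, χ ∘ GG)` of some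
homomorphism `χ` on the kernel `R/[F,R]` of the canonical map
`φ : F/[F,R] → F/R`, computed via a normalized section `λ` of `φ`. -/
theorem transgression_surjective_of_free_presentation {X A : Type*}
    [AddCommGroup A] (R : LieIdeal ℤ (FreeLieAlgebra ℤ X))
    (φ : (FreeLieAlgebra ℤ X ⧸
        (⁅(⊤ : LieIdeal ℤ (FreeLieAlgebra ℤ X)), R⁆ :
          LieIdeal ℤ (FreeLieAlgebra ℤ X))) →ₗ⁅ℤ⁆ (FreeLieAlgebra ℤ X ⧸ R))
    (hφ : ∀ x : FreeLieAlgebra ℤ X,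
      φ (LieSubmodule.Quotient.mk x) = LieSubmodule.Quotient.mk x)
    (f g : (FreeLieAlgebra ℤ X ⧸ R) → (FreeLieAlgebra ℤ X ⧸ R) → A)
    (hfg : IsLieRingCocycle f g) :
    ∃ (χ : φ.ker →+ A)
      (lam : (FreeLieAlgebra ℤ X ⧸ R) → (FreeLieAlgebra ℤ X ⧸
        (⁅(⊤ : LieIdeal ℤ (FreeLieAlgebra ℤ X)), R⁆ :
          LieIdeal ℤ (FreeLieAlgebra ℤ X))))
      (FF GG : (FreeLieAlgebra ℤ X ⧸ R) → (FreeLieAlgebra ℤ X ⧸ R) → φ.ker),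
      (∀ x : FreeLieAlgebra ℤ X ⧸ R, φ (lam x) = x) ∧ lam 0 = 0 ∧
      (∀ x y : FreeLieAlgebra ℤ X ⧸ R,
        (FF x y : _) = ⁅lam x, lam y⁆ - lam ⁅x, y⁆) ∧
      (∀ x y : FreeLieAlgebra ℤ X ⧸ R,
        (GG x y : _) = lam x + lam y - lam (x + y)) ∧
      IsLieRingCoboundary (fun x y => f x y - χ (FF x y))
        (fun x y => g x y - χ (GG x y)) := by
  classical
  letI instE : LieRing (CExt (FreeLieAlgebra ℤ X ⧸ R) A) :=
    CocycleAux.cextLieRing f g hfg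
  -- basic computation rules in E := CExt (FreeLieAlgebra ℤ X ⧸ R) A
  have Eadd : ∀ a b : CExt (FreeLieAlgebra ℤ X ⧸ R) A,
      a + b = ⟨a.fst + b.fst, a.snd + b.snd + g a.fst b.fst⟩ := fun a b => rfl
  have Ezero : (0 : CExt (FreeLieAlgebra ℤ X ⧸ R) A) = ⟨0, 0⟩ := rfl
  have Eneg : ∀ a : CExt (FreeLieAlgebra ℤ X ⧸ R) A,
      -a = ⟨-a.fst, -a.snd - g a.fst (-a.fst)⟩ := fun a => rfl
  have Elie : ∀ a b : CExt (FreeLieAlgebra ℤ X ⧸ R) A,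
      ⁅a, b⁆ = ⟨⁅a.fst, b.fst⁆, f a.fst b.fst⟩ := fun a b => rfl
  have Esub : ∀ a b : CExt (FreeLieAlgebra ℤ X ⧸ R) A,
      a.fst = b.fst → a - b = ⟨0, a.snd - b.snd⟩ := by
    intro a b hab
    rw [sub_eq_add_neg, Eneg, Eadd]
    refine CExt.ext ?_ ?_
    · show a.fst + -b.fst = 0
      rw [hab]; abel
    · show a.snd + (-b.snd - g b.fst (-b.fst)) + g a.fst (-b.fst) = a.snd - b.snd
      rw [hab]; abel
  -- the projection π : E →ₗ⁅ℤ⁆ L'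
  let fstHom : CExt (FreeLieAlgebra ℤ X ⧸ R) A →+ (FreeLieAlgebra ℤ X ⧸ R) :=
    AddMonoidHom.mk' CExt.fst (fun a b => rfl)
  let π : CExt (FreeLieAlgebra ℤ X ⧸ R) A →ₗ⁅ℤ⁆ (FreeLieAlgebra ℤ X ⧸ R) :=
    { fstHom.toIntLinearMap with map_lie' := fun {a b} => rfl }
  have hπ : ∀ a : CExt (FreeLieAlgebra ℤ X ⧸ R) A, π a = a.fst := fun a => rfl
  -- the canonical projection F → F ⧸ R as a Lie algebra hom
  let mkL : FreeLieAlgebra ℤ X →ₗ⁅ℤ⁆ (FreeLieAlgebra ℤ X ⧸ R) :=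
    { R.toSubmodule.mkQ with map_lie' := fun {a b} => rfl }
  -- lift the generators into E
  let ψ : FreeLieAlgebra ℤ X →ₗ⁅ℤ⁆ CExt (FreeLieAlgebra ℤ X ⧸ R) A :=
    FreeLieAlgebra.lift ℤ
      (fun x => (⟨LieSubmodule.Quotient.mk (N := R) (FreeLieAlgebra.of ℤ x), 0⟩ :
        CExt (FreeLieAlgebra ℤ X ⧸ R) A))
  have hψ : ∀ u : FreeLieAlgebra ℤ X,
      π (ψ u) = LieSubmodule.Quotient.mk (N := R) u := by
    have h : π.comp ψ = mkL := by
      apply FreeLieAlgebra.hom_ext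
      intro x
      show π (ψ (FreeLieAlgebra.of ℤ x)) = mkL (FreeLieAlgebra.of ℤ x)
      rw [show ψ (FreeLieAlgebra.of ℤ x)
          = (⟨LieSubmodule.Quotient.mk (N := R) (FreeLieAlgebra.of ℤ x), 0⟩ :
            CExt (FreeLieAlgebra ℤ X ⧸ R) A) from
        FreeLieAlgebra.lift_of_apply _ x]
      rfl
    intro u
    exact LieHom.congr_fun h u
  -- ψ kills ⁅⊤, R⁆
  have hker : (⁅(⊤ : LieIdeal ℤ (FreeLieAlgebra ℤ X)), R⁆ :
      LieIdeal ℤ (FreeLieAlgebra ℤ X)) ≤ ψ.ker := by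
    rw [LieSubmodule.lie_le_iff]
    intro x _ r hr
    rw [LieHom.mem_ker, LieHom.map_lie, Elie]
    have h1 : (ψ r).fst = 0 := by
      have h2 := hψ r
      rw [hπ] at h2
      exact h2.trans (LieSubmodule.Quotient.mk_eq_zero'.2 hr)
    rw [Ezero]
    refine CExt.ext ?_ ?_
    · show ⁅(ψ x).fst, (ψ r).fst⁆ = 0
      rw [h1, lie_zero]
    · show f (ψ x).fst (ψ r).fst = 0
      rw [h1]
      exact CocycleAux.fx0 hfg _
  -- descend ψ to the quotient
  have hker' : (⁅(⊤ : LieIdeal ℤ (FreeLieAlgebra ℤ X)), R⁆ :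
      LieIdeal ℤ (FreeLieAlgebra ℤ X)).toSubmodule ≤ LinearMap.ker ψ.toLinearMap :=
    fun u hu => hker hu
  let ψbar : (FreeLieAlgebra ℤ X ⧸
      (⁅(⊤ : LieIdeal ℤ (FreeLieAlgebra ℤ X)), R⁆ :
        LieIdeal ℤ (FreeLieAlgebra ℤ X))) →ₗ[ℤ] CExt (FreeLieAlgebra ℤ X ⧸ R) A :=
    Submodule.liftQ _ ψ.toLinearMap hker'
  have hψbar_mk : ∀ u : FreeLieAlgebra ℤ X,
      ψbar (LieSubmodule.Quotient.mk (N := ⁅⊤, R⁆) u) = ψ u := fun u => rfl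
  have hsurj : ∀ q : FreeLieAlgebra ℤ X ⧸
      (⁅(⊤ : LieIdeal ℤ (FreeLieAlgebra ℤ X)), R⁆ :
        LieIdeal ℤ (FreeLieAlgebra ℤ X)),
      ∃ u : FreeLieAlgebra ℤ X, LieSubmodule.Quotient.mk (N := ⁅⊤, R⁆) u = q := by
    intro q
    obtain ⟨u, hu⟩ := LieSubmodule.Quotient.surjective_mk' ⁅⊤, R⁆ q
    exact ⟨u, hu⟩
  have hπψbar : ∀ q, π (ψbar q) = φ q := by
    intro q
    obtain ⟨u, rfl⟩ := hsurj q
    rw [hψbar_mk, hψ, hφ]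
  have hψbar_lie : ∀ a b, ψbar ⁅a, b⁆ = ⁅ψbar a, ψbar b⁆ := by
    intro a b
    obtain ⟨u, rfl⟩ := hsurj a
    obtain ⟨v, rfl⟩ := hsurj b
    rw [← LieSubmodule.Quotient.mk_bracket, hψbar_mk, hψbar_mk, hψbar_mk,
      LieHom.map_lie]
  -- the section lam
  have hsurjφ : ∀ x : FreeLieAlgebra ℤ X ⧸ R, ∃ q, φ q = x := by
    intro x
    obtain ⟨u, hu⟩ := LieSubmodule.Quotient.surjective_mk' R x
    exact ⟨LieSubmodule.Quotient.mk (N := ⁅⊤, R⁆) u, (hφ u).trans hu⟩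
  let lam : (FreeLieAlgebra ℤ X ⧸ R) → FreeLieAlgebra ℤ X ⧸
      (⁅(⊤ : LieIdeal ℤ (FreeLieAlgebra ℤ X)), R⁆ :
        LieIdeal ℤ (FreeLieAlgebra ℤ X)) :=
    fun x => if h : x = 0 then 0 else Classical.choose (hsurjφ x)
  have hlam : ∀ x, φ (lam x) = x := by
    intro x
    by_cases h : x = 0
    · subst h
      show φ (if h : (0 : FreeLieAlgebra ℤ X ⧸ R) = 0 then 0
        else Classical.choose (hsurjφ 0)) = 0
      rw [dif_pos rfl, map_zero]
    · show φ (if hc : x = 0 then 0 else Classical.choose (hsurjφ x)) = x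
      rw [dif_neg h]
      exact Classical.choose_spec (hsurjφ x)
  have hlam0 : lam 0 = 0 := by
    show (if h : (0 : FreeLieAlgebra ℤ X ⧸ R) = 0 then 0
      else Classical.choose (hsurjφ 0)) = 0
    rw [dif_pos rfl]
  -- FF and GG
  have hFFmem : ∀ x y : FreeLieAlgebra ℤ X ⧸ R,
      ⁅lam x, lam y⁆ - lam ⁅x, y⁆ ∈ φ.ker := by
    intro x y
    rw [LieHom.mem_ker, map_sub, LieHom.map_lie, hlam, hlam, hlam, sub_self]
  have hGGmem : ∀ x y : FreeLieAlgebra ℤ X ⧸ R,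
      lam x + lam y - lam (x + y) ∈ φ.ker := by
    intro x y
    rw [LieHom.mem_ker, map_sub, map_add, hlam, hlam, hlam, sub_self]
  let FF : (FreeLieAlgebra ℤ X ⧸ R) → (FreeLieAlgebra ℤ X ⧸ R) → φ.ker :=
    fun x y => ⟨⁅lam x, lam y⁆ - lam ⁅x, y⁆, hFFmem x y⟩
  let GG : (FreeLieAlgebra ℤ X ⧸ R) → (FreeLieAlgebra ℤ X ⧸ R) → φ.ker :=
    fun x y => ⟨lam x + lam y - lam (x + y), hGGmem x y⟩
  -- χ
  have hker0 : ∀ q : φ.ker, (ψbar (q : FreeLieAlgebra ℤ X ⧸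
      (⁅(⊤ : LieIdeal ℤ (FreeLieAlgebra ℤ X)), R⁆ :
        LieIdeal ℤ (FreeLieAlgebra ℤ X)))).fst = 0 := by
    intro q
    have h1 : π (ψbar (q : _)) = 0 := by
      rw [hπψbar]
      exact LieHom.mem_ker.1 q.2
    rw [hπ] at h1
    exact h1
  let χ : φ.ker →+ A := AddMonoidHom.mk' (fun q => (ψbar (q : _)).snd) (by
    intro q q'
    show (ψbar ((q : _) + (q' : _))).snd = _
    rw [map_add, Eadd, hker0, hker0, CocycleAux.g00 hfg]
    show (ψbar (q : _)).snd + (ψbar (q' : _)).snd + 0 = _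
    rw [add_zero])
  have hsfst : ∀ x : FreeLieAlgebra ℤ X ⧸ R, (ψbar (lam x)).fst = x := by
    intro x
    have h1 := hπψbar (lam x)
    rw [hlam, hπ] at h1
    exact h1
  refine ⟨χ, lam, FF, GG, hlam, hlam0, fun x y => rfl, fun x y => rfl,
    fun x => -(ψbar (lam x)).snd, ?_, ?_, ?_⟩
  · show -(ψbar (lam 0)).snd = 0
    rw [hlam0, map_zero, Ezero, neg_zero]
  · intro x y
    show f x y - χ (FF x y) = - -(ψbar (lam ⁅x, y⁆)).snd
    have hχ : χ (FF x y) = f x y - (ψbar (lam ⁅x, y⁆)).snd := by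
      show (ψbar (⁅lam x, lam y⁆ - lam ⁅x, y⁆)).snd = _
      rw [map_sub, hψbar_lie]
      rw [show (⁅ψbar (lam x), ψbar (lam y)⁆ : CExt (FreeLieAlgebra ℤ X ⧸ R) A)
          = ⟨⁅x, y⁆, f x y⟩ from by rw [Elie, hsfst, hsfst]]
      rw [Esub _ _ (by rw [hsfst])]
    rw [hχ]
    abel
  · intro x y
    show g x y - χ (GG x y) = -(ψbar (lam x)).snd + -(ψbar (lam y)).snd
      - -(ψbar (lam (x + y))).snd
    have hχ : χ (GG x y) = (ψbar (lam x)).snd + (ψbar (lam y)).snd + g x y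
        - (ψbar (lam (x + y))).snd := by
      show (ψbar (lam x + lam y - lam (x + y))).snd = _
      rw [map_sub, map_add]
      rw [show (ψbar (lam x) + ψbar (lam y) : CExt (FreeLieAlgebra ℤ X ⧸ R) A)
          = ⟨x + y, (ψbar (lam x)).snd + (ψbar (lam y)).snd + g x y⟩ from by
        rw [Eadd, hsfst, hsfst]]
      rw [Esub _ _ (by rw [hsfst])]
    rw [hχ]
    abel
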